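/- Let p ∈ (0,1]. For any matrix X ∈ ℝ^{n×m}, the Schatten p-quasinorm satisfies ‖X‖_{S_p}^p ≤ ‖X‖_{2,p}^p, i.e. Σ_i σ_i(X)^p ≤ Σ_{j=1}^m ‖X_j‖^p, where X_j denotes the j-th column of X and σ_i(X) the singular values of X. -/

import Mathlib

open Matrix

/-- The singular values of a real matrix `X`, as the square roots of the
eigenvalues of `Xᴴ X`. -/
noncomputable def singVals {n m : ℕ} (X : Matrix (Fin n) (Fin m) ℝ) : Fin m → ℝ :=
  fun i => Real.sqrt ((Matrix.isHermitian_conjTranspose_mul_self X).eigenvalues i)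

/-- Jensen's inequality for the concave function `x ↦ x ^ q`, `q ∈ (0,1]`. -/
lemma jensen_rpow_concave {ι : Type*} (s : Finset ι) (w μ : ι → ℝ)
    (hw : ∀ i ∈ s, 0 ≤ w i) (hw' : ∑ i ∈ s, w i = 1) (hμ : ∀ i ∈ s, 0 ≤ μ i)
    {q : ℝ} (hq0 : 0 < q) (hq1 : q ≤ 1) :
    ∑ i ∈ s, w i * μ i ^ q ≤ (∑ i ∈ s, w i * μ i) ^ q := by
  have hp : (1 : ℝ) ≤ 1 / q := by
    rw [le_div_iff₀ hq0]; linarith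
  have h := Real.arith_mean_le_rpow_mean s w (fun i => μ i ^ q) hw hw'
    (fun i hi => Real.rpow_nonneg (hμ i hi) q) hp
  have hsimp : ∀ i ∈ s, w i * (μ i ^ q) ^ (1 / q) = w i * μ i := by
    intro i hi
    rw [← Real.rpow_mul (hμ i hi), mul_one_div_cancel hq0.ne', Real.rpow_one]
  rw [Finset.sum_congr rfl hsimp, one_div_one_div] at h
  exact h

/-- the Schatten `p`-quasinorm is dominated by the column
`ℓ_{2,p}`-quasinorm, `∑ i σ_i(X)^p ≤ ∑ j ‖X_j‖^p`, for `p ∈ (0,1]`. -/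
theorem stmt_2 {n m : ℕ} (p : ℝ) (hp0 : 0 < p) (hp1 : p ≤ 1)
    (X : Matrix (Fin n) (Fin m) ℝ) :
    ∑ i, (singVals X i) ^ p ≤ ∑ j, (Real.sqrt (∑ i, (X i j)^2)) ^ p := by
  classical
  set hA := Matrix.isHermitian_conjTranspose_mul_self X with hAdef
  set lam : Fin m → ℝ := hA.eigenvalues with hlamdef
  set U : Matrix (Fin m) (Fin m) ℝ := (hA.eigenvectorUnitary : Matrix (Fin m) (Fin m) ℝ)
    with hUdef
  have hlam : ∀ i, 0 ≤ lam i := fun i =>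
    (Matrix.posSemidef_conjTranspose_mul_self X).eigenvalues_nonneg i
  have hUU : U * star U = 1 := Matrix.mem_unitaryGroup_iff.mp hA.eigenvectorUnitary.2
  have hUU' : star U * U = 1 := Matrix.mem_unitaryGroup_iff'.mp hA.eigenvectorUnitary.2
  have hrow : ∀ j, ∑ k, (U j k) ^ 2 = 1 := by
    intro j
    have := congrArg (fun M => M j j) hUU
    simpa [Matrix.mul_apply, Matrix.star_apply, sq] using this
  have hcol : ∀ k, ∑ j, (U j k) ^ 2 = 1 := by
    intro k
    have := congrArg (fun M => M k k) hUU'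
    simpa [Matrix.mul_apply, Matrix.star_apply, sq] using this
  have hdiag : ∀ j, (Xᴴ * X) j j = ∑ k, (U j k) ^ 2 * lam k := by
    intro j
    conv_lhs => rw [hA.spectral_theorem, Unitary.conjStarAlgAut_apply]
    rw [Matrix.mul_apply]
    refine Finset.sum_congr rfl fun k _ => ?_
    rw [Matrix.mul_diagonal]
    simp only [Matrix.star_apply, Function.comp_apply, RCLike.ofReal_real_eq_id, id_eq,
      star_trivial]
    ring
  have hAjj : ∀ j, (Xᴴ * X) j j = ∑ i, (X i j) ^ 2 := by
    intro j
    simp [Matrix.mul_apply, Matrix.conjTranspose_apply, sq]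
  set q : ℝ := p / 2 with hqdef
  have hq0 : 0 < q := by positivity
  have hq1 : q ≤ 1 := by rw [hqdef]; linarith
  have hsqrt : ∀ x : ℝ, 0 ≤ x → Real.sqrt x ^ p = x ^ q := by
    intro x hx
    rw [Real.sqrt_eq_rpow, ← Real.rpow_mul hx, hqdef]
    ring_nf
  calc ∑ i, (singVals X i) ^ p = ∑ i, lam i ^ q := by
        refine Finset.sum_congr rfl fun i _ => ?_
        exact hsqrt _ (hlam i)
    _ = ∑ i, (∑ j, (U j i) ^ 2) * lam i ^ q := by
        refine Finset.sum_congr rfl fun i _ => ?_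
        rw [hcol i, one_mul]
    _ = ∑ j, ∑ i, (U j i) ^ 2 * lam i ^ q := by
        rw [Finset.sum_comm]
        exact Finset.sum_congr rfl fun i _ => Finset.sum_mul _ _ _
    _ ≤ ∑ j, (∑ i, (U j i) ^ 2 * lam i) ^ q := by
        refine Finset.sum_le_sum fun j _ => ?_
        exact jensen_rpow_concave Finset.univ (fun i => (U j i) ^ 2) lam
          (fun i _ => sq_nonneg _) (hrow j) (fun i _ => hlam i) hq0 hq1
    _ = ∑ j, (Real.sqrt (∑ i, (X i j)^2)) ^ p := by
        refine Finset.sum_congr rfl fun j _ => ?_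
        rw [← hdiag j, hAjj j, hsqrt _ (Finset.sum_nonneg fun i _ => sq_nonneg _)]
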